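/- Let G be a finite simple graph on m vertices, k ≥ 1 an integer, and u ≠ v two vertices of G such that for every set J of at most k − 1 vertices with u, v ∉ J, the vertices u and v are connected in the graph G − J obtained by deleting J. Then G contains a u–v path with at most (m − 2)/k + 1 edges; in particular the graph distance between u and v is at most 2(m − 1)/k when k ≤ m − 1. -/

import Mathlib

open SimpleGraph Finset

/-- Intermediate value: along a walk, some vertex has distance exactly `i` from `u`. -/
lemma hit_lemma {m : ℕ} (G : SimpleGraph (Fin m)) (u : Fin m) (i : ℕ) :
    ∀ {a b : Fin m} (w : G.Walk a b), G.Reachable u a →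
      G.dist u a ≤ i → i ≤ G.dist u b → ∃ x ∈ w.support, G.dist u x = i := by
  intro a b w
  induction w with
  | nil => exact fun _ h1 h2 => ⟨_, by simp, le_antisymm h1 h2⟩
  | @cons a c b h p ih =>
    intro hra h1 h2
    rcases eq_or_lt_of_le h1 with he | hlt
    · exact ⟨a, by simp, he⟩
    · have hrc : G.Reachable u c := hra.trans h.reachable
      obtain ⟨q, _, hq⟩ := hra.exists_path_of_dist
      have hdc : G.dist u c ≤ i := by
        have := SimpleGraph.dist_le (q.concat h)
        rw [SimpleGraph.Walk.length_concat, hq] at this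
        omega
      obtain ⟨x, hx, hdx⟩ := ih hrc hdc h2
      exact ⟨x, by simp [hx], hdx⟩

theorem statement6 (m k : ℕ) (hk : 1 ≤ k) (G : SimpleGraph (Fin m)) (u v : Fin m)
    (huv : u ≠ v)
    (hconn : ∀ J : Finset (Fin m), J.card ≤ k - 1 →
      ∀ (hu : u ∈ {w : Fin m | w ∉ J}) (hv : v ∈ {w : Fin m | w ∉ J}),
        (G.induce {w : Fin m | w ∉ J}).Reachable ⟨u, hu⟩ ⟨v, hv⟩) :
    (∃ p : G.Walk u v, p.IsPath ∧ (p.length : ℝ) ≤ ((m : ℝ) - 2) / k + 1) ∧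
      (k ≤ m - 1 → (G.dist u v : ℝ) ≤ 2 * ((m : ℝ) - 1) / k) := by
  have hm2 : 2 ≤ m := by
    by_contra h
    interval_cases m
    · exact u.elim0
    · exact huv (Subsingleton.elim u v)
  -- u and v are reachable in G
  have hreach : G.Reachable u v := by
    have h0 := hconn ∅ (by simp) (by simp) (by simp)
    have := h0.map (SimpleGraph.Embedding.induce _).toHom
    simpa using this
  set d := G.dist u v with hd
  have hd1 : 1 ≤ d := by
    rcases Nat.eq_zero_or_pos d with h0 | h0
    · exact absurd (hreach.dist_eq_zero_iff.mp h0) huv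
    · exact h0
  -- layers
  set L : ℕ → Finset (Fin m) := fun i => Finset.univ.filter (fun w => G.dist u w = i) with hLdef
  have hL : ∀ i ∈ Finset.Ioo 0 d, k ≤ (L i).card := by
    intro i hi
    simp only [Finset.mem_Ioo] at hi
    by_contra hlt
    push_neg at hlt
    have hcard : (L i).card ≤ k - 1 := by omega
    have hu : u ∈ {w : Fin m | w ∉ L i} := by
      simp [hLdef, SimpleGraph.dist_self]
      omega
    have hv : v ∈ {w : Fin m | w ∉ L i} := by
      simp [hLdef]
      omega
    obtain ⟨q⟩ := hconn (L i) hcard hu hv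
    have hq : (q.map (SimpleGraph.Embedding.induce _).toHom : G.Walk u v) =
        q.map (SimpleGraph.Embedding.induce _).toHom := rfl
    obtain ⟨x, hx, hdx⟩ := hit_lemma G u i (q.map (SimpleGraph.Embedding.induce _).toHom)
      (SimpleGraph.Reachable.refl u) (by simp [SimpleGraph.dist_self]) hi.2.le
    rw [SimpleGraph.Walk.support_map] at hx
    obtain ⟨y, hy, rfl⟩ := List.mem_map.mp hx
    have : (y : Fin m) ∉ L i := y.2
    exact this (Finset.mem_filter.mpr ⟨Finset.mem_univ _, hdx⟩)
  -- counting
  have hkey : k * (d - 1) ≤ m - 2 := by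
    have hdisj : (↑(Finset.Ioo 0 d : Finset ℕ) : Set ℕ).PairwiseDisjoint L := by
      intro i _ j _ hij
      simp only [Finset.disjoint_left, hLdef, Finset.mem_filter]
      rintro x ⟨-, h1⟩ ⟨-, h2⟩
      exact hij (h1.symm.trans h2)
    have hsum : ∑ i ∈ Finset.Ioo 0 d, (L i).card ≤ m - 2 := by
      rw [← Finset.card_biUnion (fun i hi j hj hij => hdisj hi hj hij)]
      have hsub : (Finset.Ioo 0 d).biUnion L ⊆ Finset.univ \ {u, v} := by
        intro x hx
        simp only [Finset.mem_biUnion, Finset.mem_Ioo, hLdef, Finset.mem_filter] at hx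
        obtain ⟨i, ⟨hi0, hid⟩, -, hxi⟩ := hx
        simp only [Finset.mem_sdiff, Finset.mem_univ, Finset.mem_insert,
          Finset.mem_singleton, true_and]
        push_neg
        constructor
        · rintro rfl; rw [SimpleGraph.dist_self] at hxi; omega
        · rintro rfl; rw [← hd] at hxi; omega
      calc ((Finset.Ioo 0 d).biUnion L).card ≤ (Finset.univ \ ({u, v} : Finset (Fin m))).card :=
            Finset.card_le_card hsub
        _ = m - 2 := by
            rw [Finset.card_sdiff_of_subset (by simp)]
            simp [Finset.card_insert_of_notMem, huv]
    calc k * (d - 1) = (Finset.Ioo 0 d).card • k := by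
          rw [Nat.card_Ioo, smul_eq_mul, Nat.sub_zero, Nat.mul_comm]
      _ ≤ ∑ i ∈ Finset.Ioo 0 d, (L i).card := Finset.card_nsmul_le_sum _ _ _ hL
      _ ≤ m - 2 := hsum
  have hkpos : (0 : ℝ) < k := by exact_mod_cast hk
  have hdR : (d : ℝ) ≤ ((m : ℝ) - 2) / k + 1 := by
    have h1 : (k : ℝ) * ((d : ℝ) - 1) ≤ (m : ℝ) - 2 := by
      have : ((k * (d - 1) : ℕ) : ℝ) ≤ ((m - 2 : ℕ) : ℝ) := by exact_mod_cast hkey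
      rw [Nat.cast_mul, Nat.cast_sub hd1, Nat.cast_sub hm2] at this
      simpa using this
    rw [div_add' _ _ _ hkpos.ne', le_div_iff₀ hkpos]
    nlinarith
  constructor
  · obtain ⟨p, hp, hlen⟩ := hreach.exists_path_of_dist
    exact ⟨p, hp, by rw [hlen, ← hd]; exact hdR⟩
  · intro hkm
    have hkmR : (k : ℝ) ≤ (m : ℝ) - 1 := by
      have hkm' : k + 1 ≤ m := by omega
      have : (k : ℝ) + 1 ≤ (m : ℝ) := by exact_mod_cast hkm'
      linarith
    calc (d : ℝ) ≤ ((m : ℝ) - 2) / k + 1 := hdR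
      _ ≤ 2 * ((m : ℝ) - 1) / k := by
          rw [div_add' _ _ _ hkpos.ne', div_le_div_iff₀ hkpos hkpos]
          nlinarith
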